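/- Let q be a Lie algebra over a field k and n ≥ 2 an integer. Suppose q = q₀ ⊕ q₁ ⊕ … ⊕ q_{n−1} is a direct sum of subspaces such that [q_i, q_j] ⊆ q_{i+j} whenever i + j ≤ n − 1 and [q_i, q_j] ⊆ q_{i+j−n} whenever i + j ≥ n (a ℤ_n-grading of q). Define the linear map D : q → q by D(x) = i·x for x ∈ q_i. Then for x ∈ q_i and y ∈ q_j one has [x,y]'_D = 0 if i + j < n and [x,y]'_D = −n·[x,y] if i + j ≥ n; moreover [·,·]''_D = −n·[·,·]'_D, so D is a near-derivation of q. -/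

import Mathlib

/-- The derived operation of a binary operation with respect to a map `D`. -/
def derivedOp {V : Type*} [AddCommGroup V] (D : V → V) :
    (V → V → V) → (V → V → V) :=
  fun ψ x y => D (ψ x y) - ψ (D x) y - ψ x (D y)

/-- Let `q = q₀ ⊕ … ⊕ q_{n−1}` be a ℤₙ-grading of a Lie algebra `q` (n ≥ 2) and let
`D(x) = i·x` for `x ∈ q_i`. Then for `x ∈ q_i`, `y ∈ q_j`: `[x,y]'_D = 0` if `i+j < n`
and `[x,y]'_D = −n·[x,y]` if `i+j ≥ n`; moreover `[·,·]''_D = −n·[·,·]'_D`, so `D` is a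
near-derivation of `q`. -/
theorem periodic_grading_near_derivation
    {k : Type*} [Field k] {L : Type*} [LieRing L] [LieAlgebra k L]
    (n : ℕ) (hn : 2 ≤ n) (Q : ℕ → Submodule k L)
    (hQbdd : ∀ i, n ≤ i → Q i = ⊥)
    (hdec : DirectSum.IsInternal Q)
    (hgrade_low : ∀ i j : ℕ, i + j ≤ n - 1 →
      ∀ x ∈ Q i, ∀ y ∈ Q j, ⁅x, y⁆ ∈ Q (i + j))
    (hgrade_high : ∀ i j : ℕ, i < n → j < n → n ≤ i + j →
      ∀ x ∈ Q i, ∀ y ∈ Q j, ⁅x, y⁆ ∈ Q (i + j - n))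
    (D : L →ₗ[k] L)
    (hD : ∀ i : ℕ, ∀ x ∈ Q i, D x = (i : k) • x) :
    (∀ i j : ℕ, ∀ x ∈ Q i, ∀ y ∈ Q j,
      (i + j < n → derivedOp ⇑D (fun x y => ⁅x, y⁆) x y = 0) ∧
      (n ≤ i + j → derivedOp ⇑D (fun x y => ⁅x, y⁆) x y = -(n : k) • ⁅x, y⁆)) ∧
    (∀ x y : L,
      (derivedOp ⇑D)^[2] (fun x y => ⁅x, y⁆) x y
        = -(n : k) • derivedOp ⇑D (fun x y => ⁅x, y⁆) x y) := by
  classical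
  set B1 : L → L → L := derivedOp ⇑D (fun x y => ⁅x, y⁆) with hB1
  have hB1def : ∀ x y : L, B1 x y = D ⁅x, y⁆ - ⁅D x, y⁆ - ⁅x, D y⁆ := fun _ _ => rfl
  set B2 : L → L → L := derivedOp ⇑D B1 with hB2
  have hB2def : ∀ x y : L, B2 x y = D (B1 x y) - B1 (D x) y - B1 x (D y) := fun _ _ => rfl
  have hB1zl : ∀ y : L, B1 0 y = 0 := by intro y; simp [hB1def]
  have hB1zr : ∀ x : L, B1 x 0 = 0 := by intro x; simp [hB1def]
  have hB1al : ∀ a b y : L, B1 (a + b) y = B1 a y + B1 b y := by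
    intro a b y; simp only [hB1def, add_lie, map_add]; abel
  have hB1ar : ∀ x a b : L, B1 x (a + b) = B1 x a + B1 x b := by
    intro x a b; simp only [hB1def, lie_add, map_add]; abel
  have hB1sl : ∀ (c : k) (x y : L), B1 (c • x) y = c • B1 x y := by
    intro c x y; simp only [hB1def, smul_lie, map_smul, smul_sub]
  have hB1sr : ∀ (c : k) (x y : L), B1 x (c • y) = c • B1 x y := by
    intro c x y; simp only [hB1def, lie_smul, map_smul, smul_sub]
  have hB2zl : ∀ y : L, B2 0 y = 0 := by
    intro y; simp [hB2def, hB1zl, map_zero]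
  have hB2zr : ∀ x : L, B2 x 0 = 0 := by
    intro x; simp [hB2def, hB1zr, map_zero]
  have hB2al : ∀ a b y : L, B2 (a + b) y = B2 a y + B2 b y := by
    intro a b y; simp only [hB2def, hB1al, map_add]; abel
  have hB2ar : ∀ x a b : L, B2 x (a + b) = B2 x a + B2 x b := by
    intro x a b; simp only [hB2def, hB1ar, map_add]; abel
  have key : ∀ i j : ℕ, ∀ x ∈ Q i, ∀ y ∈ Q j,
      (i + j < n → B1 x y = 0) ∧ (n ≤ i + j → B1 x y = -(n : k) • ⁅x, y⁆) := by
    intro i j x hx y hy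
    constructor
    · intro hij
      rw [hB1def, hD i x hx, hD j y hy,
        hD (i + j) _ (hgrade_low i j (by omega) x hx y hy), smul_lie, lie_smul]
      push_cast
      module
    · intro hij
      by_cases hi : i < n
      · by_cases hj : j < n
        · rw [hB1def, hD i x hx, hD j y hy,
            hD (i + j - n) _ (hgrade_high i j hi hj hij x hx y hy), smul_lie, lie_smul,
            Nat.cast_sub hij]
          push_cast
          module
        · have hy0 : y = 0 := by
            have h := hQbdd j (by omega); rw [h] at hy; simpa using hy
          subst hy0; simp [hB1zr]
      · have hx0 : x = 0 := by
          have h := hQbdd i (by omega); rw [h] at hx; simpa using hx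
        subst hx0; simp [hB1zl]
  have key2 : ∀ i j : ℕ, ∀ x ∈ Q i, ∀ y ∈ Q j, B2 x y = -(n : k) • B1 x y := by
    intro i j x hx y hy
    by_cases hi : i < n
    · by_cases hj : j < n
      · by_cases hij : i + j < n
        · have h0 := (key i j x hx y hy).1 hij
          rw [hB2def, hD i x hx, hD j y hy, hB1sl, hB1sr, h0]
          simp
        · have h0 := (key i j x hx y hy).2 (by omega)
          rw [hB2def, hD i x hx, hD j y hy, hB1sl, hB1sr, h0, map_smul,
            hD (i + j - n) _ (hgrade_high i j hi hj (by omega) x hx y hy),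
            Nat.cast_sub (by omega : n ≤ i + j)]
          push_cast
          module
      · have hy0 : y = 0 := by
          have h := hQbdd j (by omega); rw [h] at hy; simpa using hy
        subst hy0; simp [hB2zr, hB1zr]
    · have hx0 : x = 0 := by
        have h := hQbdd i (by omega); rw [h] at hx; simpa using hx
      subst hx0; simp [hB2zl, hB1zl]
  have keyx : ∀ j : ℕ, ∀ y ∈ Q j, ∀ x : L, B2 x y = -(n : k) • B1 x y := by
    intro j y hy x
    have hx : x ∈ ⨆ i, Q i := by
      rw [hdec.submodule_iSup_eq_top]; trivial
    refine Submodule.iSup_induction (motive := fun x => B2 x y = -(n : k) • B1 x y) Q hx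
      (fun i x hxi => key2 i j x hxi y hy) (by simp [hB2zl, hB1zl]) ?_
    intro a b ha hb
    rw [hB2al, hB1al, ha, hb, smul_add]
  have main : ∀ x y : L, B2 x y = -(n : k) • B1 x y := by
    intro x y
    have hy : y ∈ ⨆ i, Q i := by
      rw [hdec.submodule_iSup_eq_top]; trivial
    refine Submodule.iSup_induction (motive := fun y => B2 x y = -(n : k) • B1 x y) Q hy
      (fun j y hyj => keyx j y hyj x) (by simp [hB2zr, hB1zr]) ?_
    intro a b ha hb
    rw [hB2ar, hB1ar, ha, hb, smul_add]
  refine ⟨fun i j x hx y hy => key i j x hx y hy, fun x y => ?_⟩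
  have h2 : (derivedOp ⇑D)^[2] (fun x y : L => ⁅x, y⁆) = B2 := rfl
  rw [h2]
  exact main x y
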